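/- If a polynomial P with integer coefficients is the sum of the squares of two polynomials with rational coefficients, then P is also the sum of the squares of two polynomials with integer coefficients. That is, if there exist a, b ∈ ℚ[X] with P = a² + b² (viewing P in ℚ[X]), then there exist c, d ∈ ℤ[X] with P = c² + d². -/

import Mathlib

open Polynomial

private lemma dvd_of_map_zero (p : ℕ) (Q : Polynomial ℤ)
    (h : Q.map (Int.castRingHom (ZMod p)) = 0) : C (p : ℤ) ∣ Q := by
  rw [Polynomial.C_dvd_iff_dvd_coeff]
  intro i
  have h2 := congrArg (fun q => Polynomial.coeff q i) h
  simp only [Polynomial.coeff_map, Polynomial.coeff_zero, Int.coe_castRingHom] at h2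
  exact_mod_cast (ZMod.intCast_zmod_eq_zero_iff_dvd _ p).mp h2

private lemma half_step (p : ℕ) (hp : p.Prime) (x y : ℤ) (hxy : x ^ 2 + y ^ 2 = (p : ℤ))
    (A B Q : Polynomial ℤ) (h : A ^ 2 + B ^ 2 = C (p : ℤ) * Q)
    (hd : (C x * A + C y * B).map (Int.castRingHom (ZMod p)) = 0) :
    ∃ A' B' : Polynomial ℤ, A' ^ 2 + B' ^ 2 = Q := by
  haveI : Fact p.Prime := ⟨hp⟩
  have hpZ : Prime (p : ℤ) := Nat.prime_iff_prime_int.mp hp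
  have hx : (x : ZMod p) ≠ 0 := by
    intro hx0
    have hpx : (p : ℤ) ∣ x := by exact_mod_cast (ZMod.intCast_zmod_eq_zero_iff_dvd x p).mp hx0
    have hpy : (p : ℤ) ∣ y := by
      refine hpZ.dvd_of_dvd_pow (n := 2) ?_
      have : y ^ 2 = (p : ℤ) - x ^ 2 := by linarith
      rw [this]
      exact dvd_sub dvd_rfl (dvd_pow hpx two_ne_zero)
    obtain ⟨u, hu⟩ := hpx
    obtain ⟨v, hv⟩ := hpy
    have hpeq : (p : ℤ) = (p : ℤ) * (p : ℤ) * (u ^ 2 + v ^ 2) := by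
      calc (p : ℤ) = x ^ 2 + y ^ 2 := hxy.symm
        _ = (p : ℤ) * (p : ℤ) * (u ^ 2 + v ^ 2) := by rw [hu, hv]; ring
    have h1 : (p : ℤ) * (p : ℤ) ∣ (p : ℤ) * 1 := ⟨u ^ 2 + v ^ 2, by rw [mul_one]; exact hpeq⟩
    have hpne : (p : ℤ) ≠ 0 := by exact_mod_cast hp.ne_zero
    have h2 : (p : ℤ) ∣ 1 := (mul_dvd_mul_iff_left hpne).mp h1
    have h3 := Int.le_of_dvd one_pos h2
    have h4 := hp.one_lt
    omega
  -- x² + y² = 0 in ZMod p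
  have hxy0 : (x : ZMod p) ^ 2 + (y : ZMod p) ^ 2 = 0 := by
    have h5 : ((x ^ 2 + y ^ 2 : ℤ) : ZMod p) = (((p : ℕ) : ℤ) : ZMod p) := by rw [hxy]
    push_cast at h5
    rw [ZMod.natCast_self] at h5
    exact h5
  set f := Int.castRingHom (ZMod p)
  set fA := A.map f
  set fB := B.map f
  have hd' : C (x : ZMod p) * fA + C (y : ZMod p) * fB = 0 := by
    have := hd
    rwa [Polynomial.map_add, Polynomial.map_mul, Polynomial.map_mul, Polynomial.map_C,
      Polynomial.map_C] at this
  -- second combination also vanishes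
  have hd2 : (C x * B - C y * A).map f = 0 := by
    rw [Polynomial.map_sub, Polynomial.map_mul, Polynomial.map_mul, Polynomial.map_C,
      Polynomial.map_C]
    have hmul : C (x : ZMod p) * (C (x : ZMod p) * fB - C (y : ZMod p) * fA) =
        (- C (y : ZMod p)) * (C (x : ZMod p) * fA + C (y : ZMod p) * fB)
          + C ((x : ZMod p) ^ 2 + (y : ZMod p) ^ 2) * fB := by
      simp only [C_add, C_pow]
      ring
    rw [hd', hxy0] at hmul
    simp only [mul_zero, C_0, zero_mul, add_zero] at hmul
    rcases mul_eq_zero.mp hmul with h0 | h0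
    · exact absurd (Polynomial.C_eq_zero.mp h0) hx
    · exact h0
  obtain ⟨A₁, hA₁⟩ := dvd_of_map_zero p _ hd
  obtain ⟨B₁, hB₁⟩ := dvd_of_map_zero p _ hd2
  refine ⟨A₁, B₁, ?_⟩
  have hcomp : C (p : ℤ) ^ 2 * (A₁ ^ 2 + B₁ ^ 2) = C (p : ℤ) ^ 2 * Q := by
    have e1 : (C x * A + C y * B) ^ 2 + (C x * B - C y * A) ^ 2
        = C (x ^ 2 + y ^ 2) * (A ^ 2 + B ^ 2) := by
      simp only [C_add, C_pow]; ring
    rw [hA₁, hB₁] at e1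
    rw [hxy, h] at e1
    calc C (p : ℤ) ^ 2 * (A₁ ^ 2 + B₁ ^ 2)
        = (C (p : ℤ) * A₁) ^ 2 + (C (p : ℤ) * B₁) ^ 2 := by ring
      _ = C (p : ℤ) * (C (p : ℤ) * Q) := e1
      _ = C (p : ℤ) ^ 2 * Q := by ring
  exact mul_left_cancel₀ (pow_ne_zero 2 (by simpa using hpZ.ne_zero)) hcomp

private lemma step (p : ℕ) (hp : p.Prime) (x y : ℤ) (hxy : x ^ 2 + y ^ 2 = (p : ℤ))
    (A B Q : Polynomial ℤ) (h : A ^ 2 + B ^ 2 = C (p : ℤ) * Q) :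
    ∃ A' B' : Polynomial ℤ, A' ^ 2 + B' ^ 2 = Q := by
  haveI : Fact p.Prime := ⟨hp⟩
  set f := Int.castRingHom (ZMod p)
  have hprod : ((C x * A + C y * B).map f) * ((C x * A - C y * B).map f) = 0 := by
    rw [← Polynomial.map_mul]
    have e : (C x * A + C y * B) * (C x * A - C y * B)
        = C (p : ℤ) * (C (x ^ 2) * Q - B ^ 2) := by
      have : C ((p : ℤ)) = C (x ^ 2 + y ^ 2) := by rw [hxy]
      rw [this]
      simp only [C_add, C_pow]
      calc (C x * A + C y * B) * (C x * A - C y * B)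
          = C x ^ 2 * (A ^ 2 + B ^ 2) - (C x ^ 2 + C y ^ 2) * B ^ 2 := by ring
        _ = (C x ^ 2 + C y ^ 2) * ((C x) ^ 2 * Q - B ^ 2) := by
            rw [h]; simp only [C_add, C_pow] at *
            rw [show C (p : ℤ) = C x ^ 2 + C y ^ 2 by
              rw [← C_pow, ← C_pow, ← C_add, hxy]]
            ring
    rw [e, Polynomial.map_mul, Polynomial.map_C]
    have : f ((p : ℤ)) = 0 := by
      simp [f, ZMod.natCast_self]
    rw [this, C_0, zero_mul]
  rcases mul_eq_zero.mp hprod with h0 | h0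
  · exact half_step p hp x y hxy A B Q h h0
  · have hxy' : x ^ 2 + (-y) ^ 2 = (p : ℤ) := by rw [neg_pow]; simpa using hxy
    refine half_step p hp x (-y) hxy' A B Q h ?_
    rw [show C (-y) = -C y by simp]
    convert h0 using 2
    · rfl
    ring

private lemma key : ∀ n : ℕ, 0 < n → ∀ P A B : Polynomial ℤ,
    C ((n : ℤ)) ^ 2 * P = A ^ 2 + B ^ 2 → ∃ c d : Polynomial ℤ, P = c ^ 2 + d ^ 2 := by
  intro n
  induction n using Nat.strong_induction_on with
  | _ n ih =>
    intro hn P A B h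
    rcases eq_or_ne n 1 with rfl | hn1
    · exact ⟨A, B, by simpa using h⟩
    · set p := n.minFac with hpdef
      have hp : p.Prime := Nat.minFac_prime hn1
      haveI : Fact p.Prime := ⟨hp⟩
      obtain ⟨m, hm⟩ : p ∣ n := Nat.minFac_dvd n
      have hm0 : 0 < m := by
        rcases Nat.eq_zero_or_pos m with rfl | h'; · omega
        · exact h'
      have hmn : m < n := by
        have := hp.two_le
        calc m < 2 * m := by omega
          _ ≤ p * m := by exact Nat.mul_le_mul_right m this
          _ = n := hm.symm
      have hCn : C ((n : ℤ)) = C ((p : ℤ)) * C ((m : ℤ)) := by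
        rw [← C_mul]; congr 1; exact_mod_cast congrArg (Nat.cast : ℕ → ℤ) hm
      by_cases h4 : p % 4 = 3
      · -- p ≡ 3 mod 4 : p divides A and B
        set f := Int.castRingHom (ZMod p)
        have hmap : (A.map f) ^ 2 + (B.map f) ^ 2 = 0 := by
          have := congrArg (Polynomial.map f) h
          rw [Polynomial.map_mul, Polynomial.map_pow, Polynomial.map_C, Polynomial.map_add,
            Polynomial.map_pow, Polynomial.map_pow] at this
          have hfn : f ((n : ℤ)) = 0 := by
            have hz : ((n : ℤ) : ZMod p) = 0 := by
              rw [ZMod.intCast_zmod_eq_zero_iff_dvd]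
              exact_mod_cast Int.natCast_dvd_natCast.mpr (Nat.minFac_dvd n)
            simpa [f] using hz
          rw [hfn, C_0] at this
          simpa using this.symm
        have hns : ¬ IsSquare (-1 : ZMod p) := by
          rw [ZMod.exists_sq_eq_neg_one_iff]
          simpa using h4
        have hAB0 : A.map f = 0 ∧ B.map f = 0 := by
          by_cases hB : B.map f = 0
          · refine ⟨?_, hB⟩
            rw [hB] at hmap
            simpa [pow_eq_zero_iff] using hmap
          · exfalso
            have hA : A.map f ≠ 0 := by
              intro hA0; rw [hA0] at hmap; simp [pow_eq_zero_iff, hB] at hmap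
            have he : (A.map f) ^ 2 = -((B.map f) ^ 2) := by linear_combination hmap
            have hlc := congrArg Polynomial.leadingCoeff he
            rw [Polynomial.leadingCoeff_pow, Polynomial.leadingCoeff_neg,
              Polynomial.leadingCoeff_pow] at hlc
            apply hns
            refine ⟨(A.map f).leadingCoeff / (B.map f).leadingCoeff, ?_⟩
            have hBl : (B.map f).leadingCoeff ≠ 0 := by
              simpa [Polynomial.leadingCoeff_eq_zero] using hB
            field_simp
            linear_combination -hlc
        obtain ⟨A₁, hA₁⟩ := dvd_of_map_zero p A hAB0.1
        obtain ⟨B₁, hB₁⟩ := dvd_of_map_zero p B hAB0.2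
        have hcomp : C ((p : ℤ)) ^ 2 * (C ((m : ℤ)) ^ 2 * P)
            = C ((p : ℤ)) ^ 2 * (A₁ ^ 2 + B₁ ^ 2) := by
          rw [hA₁, hB₁] at h
          rw [hCn] at h
          calc C ((p : ℤ)) ^ 2 * (C ((m : ℤ)) ^ 2 * P)
              = (C ((p : ℤ)) * C ((m : ℤ))) ^ 2 * P := by ring
            _ = (C ((p : ℤ)) * A₁) ^ 2 + (C ((p : ℤ)) * B₁) ^ 2 := h
            _ = C ((p : ℤ)) ^ 2 * (A₁ ^ 2 + B₁ ^ 2) := by ring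
        have hpne : C ((p : ℤ)) ^ 2 ≠ 0 := by
          apply pow_ne_zero
          simp only [ne_eq, C_eq_zero]
          exact_mod_cast hp.ne_zero
        have hQ := mul_left_cancel₀ hpne hcomp
        exact ih m hmn hm0 P A₁ B₁ hQ
      · -- p ≢ 3 mod 4 : p = x² + y²
        obtain ⟨x, y, hxy⟩ := Nat.Prime.sq_add_sq (p := p) h4
        have hxyZ : (x : ℤ) ^ 2 + (y : ℤ) ^ 2 = (p : ℤ) := by exact_mod_cast hxy
        have h1 : A ^ 2 + B ^ 2 = C ((p : ℤ)) * (C ((p : ℤ)) * (C ((m : ℤ)) ^ 2 * P)) := by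
          rw [← h, hCn]; ring
        obtain ⟨A₁, B₁, hAB₁⟩ := step p hp _ _ hxyZ A B _ h1
        have h2 : A₁ ^ 2 + B₁ ^ 2 = C ((p : ℤ)) * (C ((m : ℤ)) ^ 2 * P) := hAB₁
        obtain ⟨A₂, B₂, hAB₂⟩ := step p hp _ _ hxyZ A₁ B₁ _ h2
        exact ih m hmn hm0 P A₂ B₂ hAB₂.symm

/-- If a polynomial with integer coefficients is a sum of two squares of polynomials with
rational coefficients, then it is a sum of two squares of polynomials with integer
coefficients. -/
theorem int_poly_sum_two_squares_of_rat (P : Polynomial ℤ)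
    (h : ∃ a b : Polynomial ℚ, P.map (Int.castRingHom ℚ) = a ^ 2 + b ^ 2) :
    ∃ c d : Polynomial ℤ, P = c ^ 2 + d ^ 2 := by
  obtain ⟨a, b, hab⟩ := h
  obtain ⟨k, hk⟩ := IsLocalization.integerNormalization_map_to_map (nonZeroDivisors ℤ) a
  obtain ⟨l, hl⟩ := IsLocalization.integerNormalization_map_to_map (nonZeroDivisors ℤ) b
  set A := IsLocalization.integerNormalization (nonZeroDivisors ℤ) a
  set B := IsLocalization.integerNormalization (nonZeroDivisors ℤ) b
  have hk0 : (k : ℤ) ≠ 0 := nonZeroDivisors.coe_ne_zero k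
  have hl0 : (l : ℤ) ≠ 0 := nonZeroDivisors.coe_ne_zero l
  have hN0 : (k : ℤ) * (l : ℤ) ≠ 0 := mul_ne_zero hk0 hl0
  -- key equation over ℤ
  have heq : C ((k : ℤ) * (l : ℤ)) ^ 2 * P = (C (l : ℤ) * A) ^ 2 + (C (k : ℤ) * B) ^ 2 := by
    apply Polynomial.map_injective (Int.castRingHom ℚ) (fun u v huv => Int.cast_injective huv)
    rw [Polynomial.map_add, Polynomial.map_mul, Polynomial.map_pow, Polynomial.map_pow,
      Polynomial.map_pow, Polynomial.map_mul, Polynomial.map_mul, Polynomial.map_C,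
      Polynomial.map_C, Polynomial.map_C]
    have halg : (Int.castRingHom ℚ) = algebraMap ℤ ℚ := rfl
    rw [halg] at hab ⊢
    rw [hk, hl, hab]
    have hsm : ∀ (c : ℤ) (q : Polynomial ℚ), c • q = C ((c : ℚ)) * q := by
      intro c q
      rw [zsmul_eq_mul, Polynomial.C_eq_intCast]
    rw [hsm, hsm]
    simp only [map_mul, eq_intCast, Int.cast_mul, C_mul]
    ring
  have hNa : C (((((k : ℤ) * (l : ℤ)).natAbs : ℤ))) ^ 2 = C ((k : ℤ) * (l : ℤ)) ^ 2 := by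
    rw [← C_pow, ← C_pow]
    congr 1
    rw [Int.natCast_natAbs, sq_abs]
  apply key ((k : ℤ) * (l : ℤ)).natAbs (by simpa [Int.natAbs_pos] using hN0) P
    (C (l : ℤ) * A) (C (k : ℤ) * B)
  rw [hNa]
  exact heq
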